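/- Let H be an n×n real diagonal matrix, θ ∈ ℝ, and let Z(x) = ‖⁅x,H⁆‖⁻² · ⁅x, ⁅xᴴ, H⁆⁆. Suppose I ⊆ ℝ is an interval containing 0 and γ : ℝ → (n×n complex matrices) satisfies, for every t ∈ I, that ⁅γ(t), H⁆ ≠ 0 and γ has derivative e^{iθ} · Z(γ(t)) at t. Then for every t ∈ I one has trace(γ(t)·H) = trace(γ(0)·H) + t·e^{iθ}. (Along the flow of e^{iθ}Z, the height function f_H moves at constant unit speed in the direction e^{iθ}.) -/

import Mathlib

open Matrix

attribute [local instance] Matrix.frobeniusNormedAddCommGroup Matrix.frobeniusNormedSpace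

/-- The real diagonal matrix `H`, viewed as a complex matrix. -/
noncomputable def Hmat (n : ℕ) (h : Fin n → ℝ) : Matrix (Fin n) (Fin n) ℂ :=
  Matrix.diagonal (fun i => (h i : ℂ))

/-- The transversal vector field `Z(x) = ‖⁅x,H⁆‖⁻² • ⁅x, ⁅xᴴ, H⁆⁆`. -/
noncomputable def Zfield (n : ℕ) (h : Fin n → ℝ) :
    Matrix (Fin n) (Fin n) ℂ → Matrix (Fin n) (Fin n) ℂ :=
  fun x => (‖⁅x, Hmat n h⁆‖ ^ 2)⁻¹ • ⁅x, ⁅xᴴ, Hmat n h⁆⁆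



lemma trace_sq (n : ℕ) (M : Matrix (Fin n) (Fin n) ℂ) :
    Matrix.trace (Mᴴ * M) = (‖M‖ ^ 2 : ℝ) := by
  have hnorm : (‖M‖ ^ 2 : ℝ) = ∑ i, ∑ j, ‖M i j‖ ^ 2 := by
    rw [Matrix.frobenius_norm_def, ← Real.rpow_natCast _ 2, ← Real.rpow_mul (by positivity)]
    simp [Real.rpow_two]
  rw [hnorm]
  simp only [Matrix.trace, Matrix.diag, Matrix.mul_apply, Matrix.conjTranspose_apply]
  push_cast
  rw [Finset.sum_comm]
  congr 1; ext i; congr 1; ext j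
  rw [show star (M i j) = (starRingEnd ℂ) (M i j) from rfl, ← Complex.normSq_eq_conj_mul_self]
  rw [Complex.normSq_eq_norm_sq]
  push_cast
  ring

lemma Hmat_herm (n : ℕ) (h : Fin n → ℝ) : (Hmat n h)ᴴ = Hmat n h := by
  simp [Hmat, Matrix.diagonal_conjTranspose]

lemma trace_Z (n : ℕ) (h : Fin n → ℝ) (x : Matrix (Fin n) (Fin n) ℂ)
    (hx : ⁅x, Hmat n h⁆ ≠ 0) :
    Matrix.trace (Zfield n h x * Hmat n h) = 1 := by
  set H := Hmat n h with hHdef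
  have hH : Hᴴ = H := Hmat_herm n h
  have step1 : ∀ A : Matrix (Fin n) (Fin n) ℂ,
      Matrix.trace (⁅x, A⁆ * H) = Matrix.trace (A * ⁅H, x⁆) := by
    intro A
    simp only [Ring.lie_def, sub_mul, mul_sub, Matrix.trace_sub, Matrix.mul_assoc]
    rw [Matrix.trace_mul_comm x (A * H), Matrix.mul_assoc]
  have hKH : ⁅xᴴ, H⁆ = -(⁅x, H⁆)ᴴ := by
    simp only [Ring.lie_def, Matrix.conjTranspose_sub, Matrix.conjTranspose_mul, hH]
    abel
  have hHx : ⁅H, x⁆ = -⁅x, H⁆ := by simp only [Ring.lie_def]; abel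
  have key : Matrix.trace (⁅x, ⁅xᴴ, H⁆⁆ * H) = ((‖⁅x, H⁆‖ : ℝ) ^ 2 : ℂ) := by
    rw [step1, hKH, hHx, neg_mul_neg, trace_sq]
    push_cast
    ring
  have hnz : (‖⁅x, H⁆‖ ^ 2 : ℝ) ≠ 0 := by
    have := norm_ne_zero_iff.2 hx
    positivity
  rw [Zfield]
  rw [Matrix.smul_mul, Matrix.trace_smul, ← hHdef, key]
  rw [Complex.real_smul]
  push_cast
  field_simp
  exact div_self (by exact_mod_cast norm_ne_zero_iff.2 hx)

/-- Along an integral curve `γ` of the vector field `e^{iθ} Z` (defined on an interval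
`I` containing `0`, along which `⁅γ t, H⁆ ≠ 0`), the height function
`f_H(x) = trace (x * H)` moves with constant unit speed in the direction `e^{iθ}`:
`trace (γ t * H) = trace (γ 0 * H) + t * e^{iθ}`. -/
theorem height_function_along_flow
    (n : ℕ) (h : Fin n → ℝ) (θ : ℝ)
    (I : Set ℝ) (hI : I.OrdConnected) (h0 : (0 : ℝ) ∈ I)
    (γ : ℝ → Matrix (Fin n) (Fin n) ℂ)
    (hne : ∀ t ∈ I, ⁅γ t, Hmat n h⁆ ≠ 0)
    (hderiv : ∀ t ∈ I,
      HasDerivAt γ (Complex.exp (θ * Complex.I) • Zfield n h (γ t)) t) :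
    ∀ t ∈ I, Matrix.trace (γ t * Hmat n h) =
      Matrix.trace (γ 0 * Hmat n h) + t * Complex.exp (θ * Complex.I) := by
  intro t ht
  set e := Complex.exp (θ * Complex.I) with he
  set L : Matrix (Fin n) (Fin n) ℂ →ₗ[ℂ] ℂ :=
    (Matrix.traceLinearMap (Fin n) ℂ ℂ).comp (LinearMap.mulRight ℂ (Hmat n h)) with hL
  set g : ℝ → ℂ := fun s => Matrix.trace (γ s * Hmat n h) - s * e with hg
  have hgd : ∀ s ∈ I, HasDerivWithinAt g 0 I s := by
    intro s hs
    have h1 : HasDerivAt (fun u => L (γ u)) (L (e • Zfield n h (γ s))) s := by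
      have := ((L.toContinuousLinearMap.restrictScalars ℝ).hasFDerivAt
        (x := γ s)).comp_hasDerivAt s (hderiv s hs)
      exact this
    have hLval : L (e • Zfield n h (γ s)) = e := by
      simp only [hL, LinearMap.comp_apply, LinearMap.map_smul, LinearMap.mulRight_apply,
        Matrix.traceLinearMap_apply, smul_eq_mul]
      rw [trace_Z n h (γ s) (hne s hs), mul_one]
    have h2 : HasDerivAt (fun u : ℝ => (u : ℂ) * e) ((1 : ℂ) * e) s := by
      exact (Complex.ofRealCLM.hasDerivAt (x := s)).mul_const e
    have h3 : HasDerivAt g 0 s := by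
      have := (hLval ▸ h1).sub h2
      rw [one_mul, sub_self] at this
      exact this
    exact h3.hasDerivWithinAt
  have hconv : Convex ℝ I := hI.convex
  have hb := hconv.norm_image_sub_le_of_norm_hasDerivWithin_le
    (f' := fun _ => (0 : ℂ)) (C := 0) hgd (fun s _ => by simp) h0 ht
  simp only [norm_zero, zero_mul] at hb
  have hgt : g t = g 0 := by
    have := le_antisymm hb (norm_nonneg _)
    rwa [norm_eq_zero, sub_eq_zero] at this
  have := hgt
  simp only [hg, Complex.ofReal_zero, zero_mul, sub_zero] at this
  linear_combination this
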